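/- Let G be a second countable locally compact Hausdorff principal groupoid with left Haar system. If G is integrable then all orbits of G are locally closed. -/

import Mathlib

open MeasureTheory Filter Topology ENNReal Classical

/-- A topological groupoid, given by range/source maps, a (total) partial-multiplication
`mul` (only meaningful on composable pairs, i.e. when `s γ = r α`) and inversion. -/
structure TopGroupoid (G : Type*) [TopologicalSpace G] where
  r : G → G
  s : G → G
  mul : G → G → G
  inv : G → G
  r_mul : ∀ γ α, s γ = r α → r (mul γ α) = r γ
  s_mul : ∀ γ α, s γ = r α → s (mul γ α) = s α
  mul_assoc' : ∀ γ α β, s γ = r α → s α = r β → mul (mul γ α) β = mul γ (mul α β)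
  r_inv : ∀ γ, r (inv γ) = s γ
  s_inv : ∀ γ, s (inv γ) = r γ
  inv_inv' : ∀ γ, inv (inv γ) = γ
  mul_inv' : ∀ γ, mul γ (inv γ) = r γ
  inv_mul' : ∀ γ, mul (inv γ) γ = s γ
  unit_mul : ∀ γ, mul (r γ) γ = γ
  mul_unit : ∀ γ, mul γ (s γ) = γ
  continuous_r : Continuous r
  continuous_s : Continuous s
  continuous_inv : Continuous inv
  continuous_mul : ContinuousOn (fun p : G × G => mul p.1 p.2) {p | s p.1 = r p.2}

namespace TopGroupoid

variable {G : Type*} [TopologicalSpace G] (Gd : TopGroupoid G)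

/-- The unit space `G⁰` of the groupoid. -/
def units : Set G := Set.range Gd.r

/-- The orbit `[z] = r(s⁻¹{z})` of a unit `z`. -/
def orbit (z : G) : Set G := Gd.r '' (Gd.s ⁻¹' {z})

/-- A groupoid is principal if `γ ↦ (r γ, s γ)` is injective. -/
def Principal : Prop := Function.Injective (fun γ => (Gd.r γ, Gd.s γ))

/-- Product of two subsets of the groupoid: all products of composable pairs. -/
def setMul (A B : Set G) : Set G :=
  {x | ∃ γ ∈ A, ∃ α ∈ B, Gd.s γ = Gd.r α ∧ x = Gd.mul γ α}

/-- Powers of a subset with respect to `setMul`; `A ^ 1 = A`. -/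
def setPow (A : Set G) : ℕ → Set G
  | 0 => Gd.units
  | n+1 => Gd.setMul A (setPow A n)

/-- A set `W ⊆ G` is conditionally compact if `WV` and `VW` are relatively compact
for every compact `V ⊆ G`. -/
def CondCompact (W : Set G) : Prop :=
  ∀ V : Set G, IsCompact V →
    IsCompact (closure (Gd.setMul W V)) ∧ IsCompact (closure (Gd.setMul V W))

/-- A sequence `x : ℕ → G` (in the unit space) converges `k`-times in `G⁰/G` to `z`. -/
def ConvergesKTimes (x : ℕ → G) (z : G) (k : ℕ) : Prop :=
  ∃ γ : Fin k → ℕ → G,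
    (∀ i n, Gd.s (γ i n) = x n) ∧
    (∀ i, Tendsto (fun n => Gd.r (γ i n)) atTop (𝓝 z)) ∧
    (∀ i j : Fin k, i < j →
      Tendsto (fun n => Gd.mul (γ j n) (Gd.inv (γ i n))) atTop (cocompact G))

end TopGroupoid

/-- A left Haar system on a topological groupoid: a family of Radon measures `λˣ`
with support `r⁻¹{x}`, continuous in `x`, and left invariant. -/
structure HaarSystem {G : Type*} [TopologicalSpace G] [MeasurableSpace G]
    (Gd : TopGroupoid G) where
  lam : G → Measure G
  regular : ∀ x, (lam x).Regular
  supp_subset : ∀ x ∈ Gd.units, lam x {γ | Gd.r γ ≠ x} = 0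
  supp_full : ∀ x ∈ Gd.units, ∀ U : Set G, IsOpen U →
      (U ∩ Gd.r ⁻¹' {x}).Nonempty → 0 < lam x U
  continuous_int : ∀ f : G → ℝ, Continuous f → HasCompactSupport f →
      Continuous fun x => ∫ γ, f γ ∂(lam x)
  left_invariant : ∀ γ : G, ∀ f : G → ℝ, Continuous f → HasCompactSupport f →
      ∫ α, f (Gd.mul γ α) ∂(lam (Gd.s γ)) = ∫ α, f α ∂(lam (Gd.r γ))

namespace HaarSystem

variable {G : Type*} [TopologicalSpace G] [MeasurableSpace G]
  {Gd : TopGroupoid G} (HS : HaarSystem Gd)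

/-- The associated right Haar system `λ_x(E) = λˣ(E⁻¹)`, supported on `s⁻¹{x}`. -/
noncomputable def rlam (x : G) : Measure G := (HS.lam x).map Gd.inv

/-- The groupoid (with its Haar system) is integrable if
`sup_{x ∈ N} λˣ(s⁻¹ N) < ∞` for every compact `N ⊆ G⁰`. -/
def Integrable : Prop :=
  ∀ N : Set G, N ⊆ Gd.units → IsCompact N →
    (⨆ x ∈ N, HS.lam x (Gd.s ⁻¹' N)) < ⊤

/-- `G` fails to be integrable at `z` if `sup_{x ∈ U} λˣ(s⁻¹ U) = ∞` for every open
neighborhood `U` of `z` in `G⁰`. -/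
def FailsIntegrableAt (z : G) : Prop :=
  ∀ U : Set G, IsOpen U → z ∈ U →
    (⨆ x ∈ U ∩ Gd.units, HS.lam x (Gd.s ⁻¹' (U ∩ Gd.units))) = ⊤

end HaarSystem


namespace TopGroupoid

variable {G : Type*} [TopologicalSpace G] {Gd : TopGroupoid G}


lemma r_unit {x : G} (hx : x ∈ Gd.units) : Gd.r x = x := by
  obtain ⟨w, rfl⟩ := hx
  conv_lhs => rw [← Gd.mul_inv' w]
  rw [Gd.r_mul w (Gd.inv w) (Gd.r_inv w).symm]

lemma s_unit {x : G} (hx : x ∈ Gd.units) : Gd.s x = x := by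
  obtain ⟨w, rfl⟩ := hx
  conv_lhs => rw [← Gd.mul_inv' w]
  rw [Gd.s_mul w (Gd.inv w) (Gd.r_inv w).symm, Gd.s_inv]

lemma s_mem_units (γ : G) : Gd.s γ ∈ Gd.units := ⟨Gd.inv γ, Gd.r_inv γ⟩

lemma r_mem_units (γ : G) : Gd.r γ ∈ Gd.units := ⟨γ, rfl⟩

lemma units_eq_fixed : Gd.units = {x | Gd.r x = x} := by
  ext x; constructor
  · exact fun h => r_unit h
  · exact fun h => ⟨x, h⟩

lemma isClosed_units [T2Space G] : IsClosed Gd.units := by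
  rw [units_eq_fixed]
  exact isClosed_eq Gd.continuous_r continuous_id

lemma orbit_subset_units (z : G) : Gd.orbit z ⊆ Gd.units := by
  rintro x ⟨γ, -, rfl⟩; exact r_mem_units γ

lemma self_mem_orbit {z : G} (hz : z ∈ Gd.units) : z ∈ Gd.orbit z :=
  ⟨z, s_unit hz, r_unit hz⟩

lemma exists_arrow {z p q : G} (hp : p ∈ Gd.orbit z) (hq : q ∈ Gd.orbit z) :
    ∃ γ, Gd.r γ = p ∧ Gd.s γ = q := by
  obtain ⟨a, ha, rfl⟩ := hp
  obtain ⟨b, hb, rfl⟩ := hq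
  simp only [Set.mem_preimage, Set.mem_singleton_iff] at ha hb
  refine ⟨Gd.mul a (Gd.inv b), ?_, ?_⟩
  · exact Gd.r_mul a (Gd.inv b) (by rw [Gd.r_inv, ha, hb])
  · rw [Gd.s_mul a (Gd.inv b) (by rw [Gd.r_inv, ha, hb]), Gd.s_inv]

lemma mem_orbit_of_arrow {z : G} {γ : G} (hp : Gd.r γ ∈ Gd.orbit z) :
    Gd.s γ ∈ Gd.orbit z := by
  obtain ⟨b, hb, hbr⟩ := hp
  simp only [Set.mem_preimage, Set.mem_singleton_iff] at hb
  refine ⟨Gd.mul (Gd.inv γ) b, ?_, ?_⟩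
  · simp only [Set.mem_preimage, Set.mem_singleton_iff]
    rw [Gd.s_mul _ _ (by rw [Gd.s_inv, hbr]), hb]
  · rw [Gd.r_mul _ _ (by rw [Gd.s_inv, hbr]), Gd.r_inv]


variable {G : Type*} [TopologicalSpace G] {Gd : TopGroupoid G}

lemma not_mem_closure_arrows [T2Space G] [FirstCountableTopology G]
    {z p y : G} (hp : p ∈ Gd.orbit z) (hy : y ∉ Gd.orbit z)
    {L : Set G} (hL : IsCompact L) :
    y ∉ closure {q | ∃ γ ∈ L, Gd.r γ = p ∧ Gd.s γ = q} := by
  intro hcl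
  rw [mem_closure_iff_seq_limit] at hcl
  obtain ⟨q, hqA, hqy⟩ := hcl
  choose γ hγL hγr hγs using hqA
  obtain ⟨γ', hγ'L, φ, hφ, hφt⟩ := hL.tendsto_subseq hγL
  have hr : Gd.r γ' = p :=
    tendsto_nhds_unique ((Gd.continuous_r.tendsto _).comp hφt)
      (by simpa only [Function.comp_def, hγr] using (tendsto_const_nhds : Tendsto (fun _ : ℕ => p) atTop (𝓝 p)))
  have hs : Gd.s γ' = y :=
    tendsto_nhds_unique ((Gd.continuous_s.tendsto _).comp hφt)
      (by simpa only [Function.comp_def, hγs] using hqy.comp hφ.tendsto_atTop)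
  exact hy (hs ▸ mem_orbit_of_arrow (hr ▸ hp))

lemma exists_separated_family [T2Space G] [FirstCountableTopology G]
    {z y : G} {W : Set G} (hW : IsOpen W) (hyW : y ∈ W)
    (hyC : y ∈ closure (Gd.orbit z)) (hyO : y ∉ Gd.orbit z)
    {L : Set G} (hL : IsCompact L) (k : ℕ) :
    ∃ p : ℕ → G, (∀ i < k, p i ∈ Gd.orbit z ∩ W) ∧
      ∀ i j, i < j → j < k → ∀ γ, Gd.r γ = p i → Gd.s γ = p j → γ ∉ L := by
  induction k with
  | zero => exact ⟨fun _ => y, by omega, by omega⟩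
  | succ m ih =>
    obtain ⟨p, hpm, hpsep⟩ := ih
    have hA : ∀ i, i < m → y ∉ closure {q | ∃ γ ∈ L, Gd.r γ = p i ∧ Gd.s γ = q} :=
      fun i hi => not_mem_closure_arrows (hpm i hi).1 hyO hL
    set W' : Set G := W ∩ ⋂ i ∈ Finset.range m, (closure {q | ∃ γ ∈ L, Gd.r γ = p i ∧ Gd.s γ = q})ᶜ with hW'def
    have hW'open : IsOpen W' := hW.inter (isOpen_biInter_finset (fun i _ => isClosed_closure.isOpen_compl))
    have hyW' : y ∈ W' := by
      refine ⟨hyW, ?_⟩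
      simp only [Set.mem_iInter, Set.mem_compl_iff, Finset.mem_range]
      exact fun i hi => hA i hi
    obtain ⟨q, hqO, hqW'⟩ : ∃ q, q ∈ Gd.orbit z ∧ q ∈ W' := by
      have := mem_closure_iff.1 hyC W' hW'open hyW'
      obtain ⟨q, hq1, hq2⟩ := this
      exact ⟨q, hq2, hq1⟩
    refine ⟨fun n => if n = m then q else p n, ?_, ?_⟩
    · intro i hi
      by_cases h : i = m
      · simp only [h, if_pos rfl]; exact ⟨hqO, hqW'.1⟩
      · simp only [if_neg h]; exact hpm i (by omega)
    · intro i j hij hj γ hγr hγs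
      by_cases h : j = m
      · subst h
        simp only [if_neg (by omega : i ≠ j)] at hγr
        simp only [if_pos rfl] at hγs
        intro hγL
        have : q ∈ closure {q | ∃ γ ∈ L, Gd.r γ = p i ∧ Gd.s γ = q} :=
          subset_closure ⟨γ, hγL, hγr, hγs⟩
        have hq2 := hqW'.2
        simp only [Set.mem_iInter, Set.mem_compl_iff, Finset.mem_range] at hq2
        exact hq2 i (by omega) this
      · simp only [if_neg h, if_neg (by omega : i ≠ m)] at hγr hγs
        exact hpsep i j hij (by omega) γ hγr hγs

lemma isCompact_mulInvSet [T2Space G] {S : Set G} (hS : IsCompact S) :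
    IsCompact ((fun p : G × G => Gd.mul p.1 (Gd.inv p.2)) ''
      {p ∈ S ×ˢ S | Gd.s p.1 = Gd.s p.2}) := by
  have hcpt : IsCompact {p ∈ S ×ˢ S | Gd.s p.1 = Gd.s p.2} := by
    refine (hS.prod hS).of_isClosed_subset ?_ (fun p hp => hp.1)
    exact ((hS.prod hS).isClosed).inter
      (isClosed_eq (Gd.continuous_s.comp continuous_fst) (Gd.continuous_s.comp continuous_snd))
  refine hcpt.image_of_continuousOn ?_
  have h1 : Continuous (fun p : G × G => (p.1, Gd.inv p.2)) :=
    continuous_fst.prodMk (Gd.continuous_inv.comp continuous_snd)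
  refine (Gd.continuous_mul.comp h1.continuousOn ?_ : ContinuousOn _ _)
  intro p hp
  simp only [Set.mem_setOf_eq] at hp ⊢
  rw [Gd.r_inv, hp.2]

end TopGroupoid

open TopGroupoid

theorem key_lemma {G : Type*} [TopologicalSpace G] [T2Space G] [LocallyCompactSpace G]
    [SecondCountableTopology G] [MeasurableSpace G] [BorelSpace G]
    {Gd : TopGroupoid G} (HS : HaarSystem Gd) (hpr : Gd.Principal)
    (hint : HS.Integrable) {z x₀ : G} (hz : z ∈ Gd.units)
    (hx₀O : x₀ ∈ Gd.orbit z)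
    (hx₀D : x₀ ∈ closure (closure (Gd.orbit z) \ Gd.orbit z)) : False := by
  classical
  set O := Gd.orbit z with hOdef
  have hx₀u : x₀ ∈ Gd.units := orbit_subset_units z hx₀O
  -- compact neighborhood
  obtain ⟨K, hKc, hKnb⟩ := exists_compact_mem_nhds x₀
  set N : Set G := K ∩ Gd.units with hNdef
  have hNc : IsCompact N := hKc.inter_right isClosed_units
  have hNu : N ⊆ Gd.units := Set.inter_subset_right
  have hx₀K : x₀ ∈ interior K := mem_interior_iff_mem_nhds.2 hKnb
  -- the Haar measure at x₀
  haveI : (HS.lam x₀).Regular := HS.regular x₀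
  have hsKopen : IsOpen (Gd.s ⁻¹' interior K) := isOpen_interior.preimage Gd.continuous_s
  have hpos : 0 < HS.lam x₀ (Gd.s ⁻¹' interior K) := by
    refine HS.supp_full x₀ hx₀u _ hsKopen ⟨x₀, ?_, ?_⟩
    · simp only [Set.mem_preimage, s_unit hx₀u]; exact hx₀K
    · simp only [Set.mem_preimage, Set.mem_singleton_iff, r_unit hx₀u]
  obtain ⟨K₁, hK₁sub, hK₁c, hK₁pos⟩ := hsKopen.exists_lt_isCompact hpos
  obtain ⟨Lc, hLcC, hK₁Lc, hLcsub⟩ := exists_compact_between hK₁c hsKopen hK₁sub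
  have hclint : IsCompact (closure (interior Lc)) :=
    hLcC.of_isClosed_subset isClosed_closure (closure_minimal interior_subset hLcC.isClosed)
  obtain ⟨f, hfsupp, hfone, hfrange⟩ :=
    exists_tsupport_one_of_isOpen_isClosed isOpen_interior hclint hK₁c.isClosed hK₁Lc
  set h : G → ℝ := fun γ => f γ with hhdef
  have hhcont : Continuous h := f.continuous
  have htsupp : tsupport h ⊆ interior Lc := hfsupp
  have hhCS : HasCompactSupport h :=
    hLcC.of_isClosed_subset isClosed_closure (htsupp.trans interior_subset)
  set S : Set G := tsupport h with hSdef
  have hScpt : IsCompact S := hhCS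
  have hSsub : S ⊆ Gd.s ⁻¹' interior K := (htsupp.trans interior_subset).trans hLcsub
  have hK₁fin : HS.lam x₀ K₁ < ⊤ := hK₁c.measure_lt_top
  set c : ℝ := (HS.lam x₀ K₁).toReal with hcdef
  have hcpos : 0 < c := ENNReal.toReal_pos hK₁pos.ne' hK₁fin.ne
  set F : G → ℝ := fun x => ∫ γ, h γ ∂(HS.lam x) with hFdef
  have hFcont : Continuous F := HS.continuous_int h hhcont hhCS
  have hFx₀ : c ≤ F x₀ := by
    have hind : MeasureTheory.Integrable (K₁.indicator (fun _ => (1:ℝ))) (HS.lam x₀) :=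
      (integrable_indicator_iff hK₁c.measurableSet).2 (integrableOn_const hK₁fin.ne)
    have hih : MeasureTheory.Integrable h (HS.lam x₀) :=
      hhcont.integrable_of_hasCompactSupport hhCS
    have hle : K₁.indicator (fun _ => (1:ℝ)) ≤ h := by
      intro γ; by_cases hγ : γ ∈ K₁
      · rw [Set.indicator_of_mem hγ]
        exact le_of_eq (hfone hγ).symm
      · rw [Set.indicator_of_notMem hγ]
        exact (hfrange γ).1
    calc c = ∫ γ, K₁.indicator (fun _ => (1:ℝ)) γ ∂(HS.lam x₀) := by
            rw [show (fun _ => (1:ℝ)) = (1 : G → ℝ) from rfl,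
              MeasureTheory.integral_indicator_one hK₁c.measurableSet]
            rfl
      _ ≤ F x₀ := integral_mono_ae hind hih (Filter.Eventually.of_forall hle)
  set c' : ℝ := c / 2 with hc'def
  have hc'pos : 0 < c' := by positivity
  set V₀ : Set G := F ⁻¹' Set.Ioi c' with hV₀def
  have hV₀open : IsOpen V₀ := isOpen_Ioi.preimage hFcont
  have hx₀V₀ : x₀ ∈ V₀ := by
    simp only [hV₀def, Set.mem_preimage, Set.mem_Ioi]
    linarith
  set W₀ : Set G := V₀ ∩ interior K with hW₀def
  have hW₀open : IsOpen W₀ := hV₀open.inter isOpen_interior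
  have hx₀W₀ : x₀ ∈ W₀ := ⟨hx₀V₀, hx₀K⟩
  -- the compact separation set
  set L₁ : Set G := (fun p : G × G => Gd.mul p.1 (Gd.inv p.2)) ''
      {p ∈ S ×ˢ S | Gd.s p.1 = Gd.s p.2} with hL₁def
  have hL₁c : IsCompact L₁ := isCompact_mulInvSet hScpt
  set L' : Set G := L₁ ∪ Gd.inv '' L₁ with hL'def
  have hL'c : IsCompact L' := hL₁c.union (hL₁c.image Gd.continuous_inv)
  -- a point of the closure of the orbit, not in the orbit, inside W₀
  obtain ⟨y, hyW₀, hyD⟩ := mem_closure_iff.1 hx₀D W₀ hW₀open hx₀W₀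
  have hT := hint N hNu hNc
  have hmain : ∀ k : ℕ, (k : ℝ≥0∞) * ENNReal.ofReal c' ≤ ⨆ x ∈ N, HS.lam x (Gd.s ⁻¹' N) := by
    intro k
    obtain ⟨p, hpmem, hpsep⟩ := exists_separated_family hW₀open hyW₀ hyD.1 hyD.2 hL'c k
    rcases Nat.eq_zero_or_pos k with hk0 | hkpos
    · simp [hk0]
    have hp0 : p 0 ∈ O ∩ W₀ := hpmem 0 hkpos
    set q : ℕ → G := fun i => if i < k then p i else p 0 with hqdef
    have hqO : ∀ i, q i ∈ O := by
      intro i; by_cases hi : i < k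
      · simpa [hqdef, hi] using (hpmem i hi).1
      · simpa [hqdef, hi] using hp0.1
    have hqp : ∀ i, i < k → q i = p i := fun i hi => by simp [hqdef, hi]
    choose δ hδr hδs using fun i => exists_arrow hp0.1 (hqO i)
    set x : G := p 0 with hxdef
    set μ : Measure G := HS.lam x with hμdef
    haveI : μ.Regular := HS.regular x
    have hxu : x ∈ Gd.units := orbit_subset_units z hp0.1
    have haeR : ∀ᵐ α ∂μ, Gd.r α = x := by
      have h0 := HS.supp_subset x hxu
      rw [MeasureTheory.ae_iff]
      simpa using h0
    -- endpoints of the arrows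
    have hri : ∀ i, Gd.r (Gd.inv (δ i)) = q i := fun i => by rw [Gd.r_inv, hδs]
    have hsi : ∀ i, Gd.s (Gd.inv (δ i)) = x := fun i => by rw [Gd.s_inv, hδr]
    set E : ℕ → Set G := fun i =>
      Gd.r ⁻¹' {x} ∩ (fun α => Gd.mul (Gd.inv (δ i)) α) ⁻¹' S with hEdef
    have hTcont : ∀ i, ContinuousOn (fun α => Gd.mul (Gd.inv (δ i)) α) (Gd.r ⁻¹' {x}) := by
      intro i
      refine Gd.continuous_mul.comp
        ((continuous_const.prodMk continuous_id).continuousOn) ?_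
      intro α hα
      simp only [Set.mem_preimage, Set.mem_singleton_iff] at hα
      show Gd.s (Gd.inv (δ i)) = Gd.r (id α)
      rw [hsi i, id_eq, hα]
    have hrclosed : IsClosed (Gd.r ⁻¹' {x}) := isClosed_singleton.preimage Gd.continuous_r
    have hEclosed : ∀ i, IsClosed (E i) := fun i =>
      (hTcont i).preimage_isClosed_of_isClosed hrclosed (hScpt.isClosed)
    have hEmeas : ∀ i, MeasurableSet (E i) := fun i => (hEclosed i).measurableSet
    -- E i is contained in s⁻¹ N
    have hEsub : ∀ i, E i ⊆ Gd.s ⁻¹' N := by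
      intro i α hα
      obtain ⟨hrα, hTS⟩ := hα
      simp only [Set.mem_preimage, Set.mem_singleton_iff] at hrα
      have hcomp : Gd.s (Gd.inv (δ i)) = Gd.r α := by rw [hsi i, hrα]
      have hseq : Gd.s (Gd.mul (Gd.inv (δ i)) α) = Gd.s α := Gd.s_mul _ _ hcomp
      have : Gd.s α ∈ interior K := by
        have := hSsub hTS
        rwa [Set.mem_preimage, hseq] at this
      exact ⟨interior_subset this, s_mem_units α⟩
    -- disjointness
    have hEdisj : ∀ i j, i < k → j < k → i ≠ j → Disjoint (E i) (E j) := by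
      intro i j hi hj hij
      rw [Set.disjoint_left]
      rintro α ⟨hrα, haS⟩ ⟨hrα', hbS⟩
      simp only [Set.mem_preimage, Set.mem_singleton_iff] at hrα
      set a : G := Gd.mul (Gd.inv (δ i)) α with hadef
      set b : G := Gd.mul (Gd.inv (δ j)) α with hbdef
      have hcompa : Gd.s (Gd.inv (δ i)) = Gd.r α := by rw [hsi i, hrα]
      have hcompb : Gd.s (Gd.inv (δ j)) = Gd.r α := by rw [hsi j, hrα]
      have hra : Gd.r a = p i := by rw [hadef, Gd.r_mul _ _ hcompa, hri i, hqp i hi]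
      have hsa : Gd.s a = Gd.s α := Gd.s_mul _ _ hcompa
      have hrb : Gd.r b = p j := by rw [hbdef, Gd.r_mul _ _ hcompb, hri j, hqp j hj]
      have hsb : Gd.s b = Gd.s α := Gd.s_mul _ _ hcompb
      have hcompg : Gd.s a = Gd.r (Gd.inv b) := by rw [Gd.r_inv, hsa, hsb]
      set γstar : G := Gd.mul a (Gd.inv b) with hγdef
      have hrγ : Gd.r γstar = p i := by rw [hγdef, Gd.r_mul _ _ hcompg, hra]
      have hsγ : Gd.s γstar = p j := by rw [hγdef, Gd.s_mul _ _ hcompg, Gd.s_inv, hrb]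
      have hγL₁ : γstar ∈ L₁ := ⟨(a, b), ⟨⟨haS, hbS⟩, by rw [hsa, hsb]⟩, rfl⟩
      rcases Nat.lt_or_ge i j with hlt | hge
      · exact hpsep i j hlt hj γstar hrγ hsγ (Or.inl hγL₁)
      · have hjlt : j < i := by omega
        refine hpsep j i hjlt hi (Gd.inv γstar) ?_ ?_ (Or.inr ⟨γstar, hγL₁, rfl⟩)
        · rw [Gd.r_inv, hsγ]
        · rw [Gd.s_inv, hrγ]
    -- mass estimate
    have hmass : ∀ i, i < k → ENNReal.ofReal c' ≤ μ (E i) := by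
      intro i hi
      rcases eq_or_ne (μ (E i)) ⊤ with htop | hfin
      · rw [htop]; exact le_top
      have hpiV₀ : p i ∈ V₀ := ((hpmem i hi).2).1
      have hFpi : c' < F (p i) := hpiV₀
      set g : G → ℝ := fun α => h (Gd.mul (Gd.inv (δ i)) α) with hgdef
      have hkey : ∫ α, g α ∂μ = F (p i) := by
        have := HS.left_invariant (Gd.inv (δ i)) h hhcont hhCS
        rw [hsi i, hri i, hqp i hi] at this
        exact this
      have hgmeas : AEStronglyMeasurable g μ := by
        have hgc : ContinuousOn g (Gd.r ⁻¹' {x}) := hhcont.comp_continuousOn (hTcont i)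
        have haem : AEMeasurable g (μ.restrict (Gd.r ⁻¹' {x})) :=
          hgc.aemeasurable hrclosed.measurableSet
        rw [Measure.restrict_eq_self_of_ae_mem
          (by filter_upwards [haeR] with α hα using hα : ∀ᵐ α ∂μ, α ∈ Gd.r ⁻¹' {x})] at haem
        exact aestronglyMeasurable_iff_aemeasurable.2 haem
      have hindint : MeasureTheory.Integrable ((E i).indicator fun _ => (1:ℝ)) μ :=
        (integrable_indicator_iff (hEmeas i)).2 (integrableOn_const hfin)
      have hbound : ∀ᵐ α ∂μ, g α ≤ (E i).indicator (fun _ => (1:ℝ)) α ∧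
          ‖g α‖ ≤ (E i).indicator (fun _ => (1:ℝ)) α := by
        filter_upwards [haeR] with α hrα
        by_cases hαE : α ∈ E i
        · rw [Set.indicator_of_mem hαE]
          have := hfrange (Gd.mul (Gd.inv (δ i)) α)
          constructor
          · exact this.2
          · rw [Real.norm_eq_abs, abs_of_nonneg this.1]; exact this.2
        · have hg0 : g α = 0 := by
            have hTαS : Gd.mul (Gd.inv (δ i)) α ∉ S := by
              intro hc
              exact hαE ⟨by simpa using hrα, hc⟩
            exact image_eq_zero_of_notMem_tsupport (f := h) hTαS
          rw [Set.indicator_of_notMem hαE, hg0]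
          simp
      have hgint : MeasureTheory.Integrable g μ :=
        MeasureTheory.Integrable.mono' hindint hgmeas
          (by filter_upwards [hbound] with α hα using hα.2)
      have hint_le : ∫ α, g α ∂μ ≤ (μ (E i)).toReal := by
        calc ∫ α, g α ∂μ ≤ ∫ α, (E i).indicator (fun _ => (1:ℝ)) α ∂μ :=
              integral_mono_ae hgint hindint
                (by filter_upwards [hbound] with α hα using hα.1)
          _ = (μ (E i)).toReal := by
              rw [show (fun _ => (1:ℝ)) = (1 : G → ℝ) from rfl,
                MeasureTheory.integral_indicator_one (hEmeas i)]
              rfl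
      have : c' ≤ (μ (E i)).toReal := by
        rw [hkey] at hint_le; linarith
      exact ENNReal.ofReal_le_of_le_toReal this
    -- summing up
    have hxN : x ∈ N := ⟨interior_subset hp0.2.2, hxu⟩
    have hsum : (k : ℝ≥0∞) * ENNReal.ofReal c' ≤ μ (Gd.s ⁻¹' N) := by
      have hdisj : (↑(Finset.range k) : Set ℕ).PairwiseDisjoint E := by
        intro i hi j hj hij
        simp only [Finset.coe_range, Set.mem_Iio] at hi hj
        exact hEdisj i j hi hj hij
      calc (k : ℝ≥0∞) * ENNReal.ofReal c'
          = ∑ _i ∈ Finset.range k, ENNReal.ofReal c' := by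
            rw [Finset.sum_const, Finset.card_range, nsmul_eq_mul]
        _ ≤ ∑ i ∈ Finset.range k, μ (E i) :=
            Finset.sum_le_sum (fun i hi => hmass i (Finset.mem_range.1 hi))
        _ = μ (⋃ i ∈ Finset.range k, E i) :=
            (measure_biUnion_finset hdisj (fun i _ => hEmeas i)).symm
        _ ≤ μ (Gd.s ⁻¹' N) := by
            refine measure_mono ?_
            intro α hα
            simp only [Set.mem_iUnion] at hα
            obtain ⟨i, _, hαE⟩ := hα
            exact hEsub i hαE
    calc (k : ℝ≥0∞) * ENNReal.ofReal c' ≤ μ (Gd.s ⁻¹' N) := hsum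
      _ ≤ ⨆ x ∈ N, HS.lam x (Gd.s ⁻¹' N) := le_iSup₂ (f := fun x _ => HS.lam x (Gd.s ⁻¹' N)) x hxN
  -- conclusion
  have htop : (⊤ : ℝ≥0∞) ≤ ⨆ x ∈ N, HS.lam x (Gd.s ⁻¹' N) := by
    have h1 : ⨆ n : ℕ, (n : ℝ≥0∞) * ENNReal.ofReal c' = ⊤ := by
      rw [← ENNReal.iSup_mul, ENNReal.iSup_natCast,
        ENNReal.top_mul (ENNReal.ofReal_pos.2 hc'pos).ne']
    rw [← h1]
    exact iSup_le hmain
  exact absurd hT (by simp [top_le_iff.1 htop])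


/-- if `G` is integrable then all orbits are locally closed (in `G⁰`). -/
theorem stmt11 {G : Type*} [TopologicalSpace G] [T2Space G] [LocallyCompactSpace G]
    [SecondCountableTopology G] [MeasurableSpace G] [BorelSpace G]
    (Gd : TopGroupoid G) (HS : HaarSystem Gd) (hpr : Gd.Principal)
    (hint : HS.Integrable) :
    ∀ z ∈ Gd.units, IsLocallyClosed (Subtype.val ⁻¹' Gd.orbit z : Set Gd.units) := by
  intro z hz
  have hloc : IsLocallyClosed (Gd.orbit z) := by
    set O := Gd.orbit z with hOdef
    have hpt : ∀ x ∈ O, ∃ V : Set G, IsOpen V ∧ x ∈ V ∧ V ∩ closure O ⊆ O := by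
      intro x hx
      by_contra hc
      push_neg at hc
      have hxd : x ∈ closure (closure O \ O) := by
        rw [mem_closure_iff]
        intro V hVopen hxV
        obtain ⟨w, hw1, hw2⟩ := Set.not_subset.1 (hc V hVopen hxV)
        exact ⟨w, hw1.1, hw1.2, hw2⟩
      exact key_lemma HS hpr hint hz hx hxd
    choose! V hVopen hVmem hVsub using hpt
    refine ⟨⋃ x ∈ O, V x, closure O, isOpen_biUnion (fun x hx => hVopen x hx),
      isClosed_closure, ?_⟩
    ext w
    constructor
    · intro hw
      exact ⟨Set.mem_biUnion hw (hVmem w hw), subset_closure hw⟩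
    · rintro ⟨hw1, hw2⟩
      simp only [Set.mem_iUnion] at hw1
      obtain ⟨x, hx, hwV⟩ := hw1
      exact hVsub x hx ⟨hwV, hw2⟩
  exact hloc.preimage continuous_subtype_val
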